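/- Let (X,G,K) be a G-complete G-metric type space, T : X → X sequentially continuous, F : [0,∞) → [0,∞) continuous, non-decreasing, subadditive, homogeneous of degree s, with F⁻¹({0}) = {0}. Suppose there exist sequences (aₙ),(bₙ) in X such that with Δ_{i,j,k} := G(aᵢ,aⱼ,a_k) and Γ_{i,j,k} := G(bᵢ,bⱼ,b_k), all in [0,1/2), one has F(G(Tⁱx,Tʲy,Tᵏz)) ≤ F(Δ_{i,j,k}[G(x,Tⁱx,Tⁱx)+G(y,Tʲy,Tʲy)+G(z,Tᵏz,Tᵏz)]) + F(Γ_{i,j,k}·G(x,y,z)) for all x ≠ y in X, all z, and all i,j,k ≥ 1. If the sequence rᵢ = (Δ_{i,i+1,i+1}ˢ + Γ_{i,i+1,i+1}ˢ)/(1 − (2Δ_{i,i+1,i+1})ˢ) is a non-increasing λ-sequence in ℝ⁺ (with the max metric), then T has a unique fixed point in X. -/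

import Mathlib

open Filter Topology

/-- A `G`-metric type space structure on `X` with constant `K`. -/
structure IsGMetricType {X : Type*} (G : X → X → X → ℝ) (K : ℝ) : Prop where
  K_ge_one : 1 ≤ K
  nonneg : ∀ x y z, 0 ≤ G x y z
  eq_zero : ∀ x, G x x x = 0
  pos : ∀ x y, x ≠ y → 0 < G x x y
  axG3 : ∀ x y z, z ≠ y → G x x y ≤ G x y z
  symm_left : ∀ x y z, G x y z = G y x z
  symm_right : ∀ x y z, G x y z = G x z y
  polygon : ∀ (x y z : X) (n : ℕ) (w : Fin (n + 1) → X),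
    G x y z ≤ K * (G x (w 0) (w 0)
      + (∑ i : Fin n, G (w i.castSucc) (w i.succ) (w i.succ))
      + G (w (Fin.last n)) y z)

/-- A `G`-metric type space with the rectangle-type inequality (G5') instead of (G5). -/
structure IsGMetricTypeRect {X : Type*} (G : X → X → X → ℝ) (K : ℝ) : Prop where
  K_ge_one : 1 ≤ K
  nonneg : ∀ x y z, 0 ≤ G x y z
  eq_zero : ∀ x, G x x x = 0
  pos : ∀ x y, x ≠ y → 0 < G x x y
  axG3 : ∀ x y z, z ≠ y → G x x y ≤ G x y z
  symm_left : ∀ x y z, G x y z = G y x z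
  symm_right : ∀ x y z, G x y z = G x z y
  rect : ∀ x y z w, G x y z ≤ K * (G x w w + G w y z)

/-- `G`-convergence of a sequence to a point. -/
def GConverges {X : Type*} (G : X → X → X → ℝ) (s : ℕ → X) (x : X) : Prop :=
  Tendsto (fun n => G x (s n) (s n)) atTop (nhds 0)

/-- `G`-Cauchy sequence. -/
def GCauchySeq {X : Type*} (G : X → X → X → ℝ) (s : ℕ → X) : Prop :=
  ∀ ε > 0, ∃ N, ∀ m n, N ≤ m → N ≤ n → G (s n) (s m) (s m) < ε

/-- `G`-completeness. -/
def GComplete {X : Type*} (G : X → X → X → ℝ) : Prop :=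
  ∀ s : ℕ → X, GCauchySeq G s → ∃ x, GConverges G s x

private def chainSeq {X : Type*} (T : X → X) (x0 : X) : ℕ → X
  | 0 => x0
  | n+1 => T^[n+1] (chainSeq T x0 n)

private lemma tendsto_rec_aux (μ c : ℝ) (hμ0 : 0 < μ) (hμ1 : μ < 1)
    (u : ℕ → ℝ) (hu0 : ∀ k, 0 ≤ u k) (hrec : ∀ k, u (k+1) ≤ μ * u k + c * μ ^ k) :
    Tendsto u atTop (𝓝 0) := by
  have hbound : ∀ k, u k ≤ μ ^ k * u 0 + (k : ℝ) * c * μ ^ k / μ := by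
    intro k
    induction k with
    | zero => simp
    | succ k ih =>
      have h1 := hrec k
      have h2 : μ * u k ≤ μ * (μ ^ k * u 0 + (k : ℝ) * c * μ ^ k / μ) :=
        mul_le_mul_of_nonneg_left ih hμ0.le
      have hμne : μ ≠ 0 := ne_of_gt hμ0
      have h3 : u (k+1) ≤ μ * (μ ^ k * u 0 + (k : ℝ) * c * μ ^ k / μ) + c * μ ^ k := by
        linarith
      calc u (k+1) ≤ μ * (μ ^ k * u 0 + (k : ℝ) * c * μ ^ k / μ) + c * μ ^ k := h3
        _ = μ ^ (k+1) * u 0 + ((k:ℕ)+1 : ℝ) * c * μ ^ (k+1) / μ := by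
            field_simp
            ring
        _ = μ ^ (k+1) * u 0 + ((k+1 : ℕ) : ℝ) * c * μ ^ (k+1) / μ := by push_cast; ring
  have hlim : Tendsto (fun k : ℕ => μ ^ k * u 0 + (k : ℝ) * c * μ ^ k / μ) atTop (𝓝 0) := by
    have ha : Tendsto (fun k : ℕ => μ ^ k * u 0) atTop (𝓝 0) := by
      simpa using (tendsto_pow_atTop_nhds_zero_of_lt_one hμ0.le hμ1).mul_const (u 0)
    have hb : Tendsto (fun k : ℕ => (k:ℝ) * c * μ ^ k / μ) atTop (𝓝 0) := by
      have hsum : Summable (fun n : ℕ => (n:ℝ) ^ 1 * μ ^ n) :=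
        summable_pow_mul_geometric_of_norm_lt_one 1
          (by rwa [Real.norm_eq_abs, abs_of_nonneg hμ0.le])
      have ht := hsum.tendsto_atTop_zero
      have heq : (fun k : ℕ => (k:ℝ) * c * μ ^ k / μ)
          = fun k : ℕ => ((k:ℝ) ^ 1 * μ ^ k) * (c / μ) := by
        funext k; ring
      rw [heq]
      simpa using ht.mul_const (c/μ)
    simpa using ha.add hb
  exact tendsto_of_tendsto_of_tendsto_of_le_of_le tendsto_const_nhds hlim hu0 hbound

private lemma tendsto_of_rpow_tendsto (s : ℝ) (hs : 0 < s) (F1 : ℝ) (hF1 : 0 < F1)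
    (w : ℕ → ℝ) (hw : ∀ n, 0 ≤ w n)
    (h : Tendsto (fun n => w n ^ s * F1) atTop (𝓝 0)) :
    Tendsto w atTop (𝓝 0) := by
  have h2 := h.div_const F1
  rw [zero_div] at h2
  have h3 := h2.rpow_const (p := 1/s) (Or.inr (by positivity))
  rw [Real.zero_rpow (by positivity : (1:ℝ)/s ≠ 0)] at h3
  refine h3.congr fun n => ?_
  rw [mul_div_cancel_right₀ _ hF1.ne']
  rw [← Real.rpow_mul (hw n), mul_one_div, div_self hs.ne', Real.rpow_one]

set_option maxHeartbeats 2000000 in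
theorem stmt12 {X : Type*} (G : X → X → X → ℝ) (K : ℝ) (hG : IsGMetricType G K)
    (hcomp : GComplete G) (T : X → X)
    (hcont : ∀ (seq : ℕ → X) (x : X), GConverges G seq x →
      GConverges G (fun n => T (seq n)) (T x))
    (F : ℝ → ℝ) (s : ℝ) (hs : 0 < s)
    (hFc : ContinuousOn F (Set.Ici 0))
    (hFmono : MonotoneOn F (Set.Ici 0))
    (hFnn : ∀ t, 0 ≤ t → 0 ≤ F t)
    (hFsub : ∀ u v, 0 ≤ u → 0 ≤ v → F (u + v) ≤ F u + F v)
    (hFhom : ∀ c t, 0 ≤ c → 0 ≤ t → F (c * t) = c ^ s * F t)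
    (hF0 : ∀ t, 0 ≤ t → (F t = 0 ↔ t = 0))
    (a b : ℕ → X)
    (hΔ : ∀ i j k : ℕ, 1 ≤ i → 1 ≤ j → 1 ≤ k → G (a i) (a j) (a k) < 1 / 2)
    (hΓ : ∀ i j k : ℕ, 1 ≤ i → 1 ≤ j → 1 ≤ k → G (b i) (b j) (b k) < 1 / 2)
    (hcontr : ∀ x y z : X, x ≠ y → ∀ i j k : ℕ, 1 ≤ i → 1 ≤ j → 1 ≤ k →
      F (G (T^[i] x) (T^[j] y) (T^[k] z)) ≤
        F (G (a i) (a j) (a k) *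
            (G x (T^[i] x) (T^[i] x) + G y (T^[j] y) (T^[j] y) +
              G z (T^[k] z) (T^[k] z))) +
          F (G (b i) (b j) (b k) * G x y z))
    (r : ℕ → ℝ)
    (hr : ∀ i : ℕ, r i =
      (G (a i) (a (i + 1)) (a (i + 1)) ^ s + G (b i) (b (i + 1)) (b (i + 1)) ^ s) /
        (1 - (2 * G (a i) (a (i + 1)) (a (i + 1))) ^ s))
    (hdec : ∀ i : ℕ, 1 ≤ i → r (i + 1) ≤ r i)
    (hlamseq : ∃ lam : ℝ, 0 < lam ∧ lam < 1 ∧ ∃ N : ℕ, ∀ L : ℕ, N + 1 ≤ L →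
      ∑ i ∈ Finset.Icc 1 (L - 1), r i ≤ lam * L) :
    ∃! xs : X, T xs = xs := by
  have hK0 : (0:ℝ) < K := lt_of_lt_of_le zero_lt_one hG.K_ge_one
  -- rectangle inequality from the polygon inequality with n = 0
  have hrect : ∀ x y z w : X, G x y z ≤ K * (G x w w + G w y z) := by
    intro x y z w
    have h := hG.polygon x y z 0 (fun _ => w)
    simpa using h
  -- full symmetry in the form we need
  have hsym : ∀ x y : X, G x y y = G y y x := fun x y =>
    (hG.symm_left x y y).trans (hG.symm_right y x y)
  -- swap lemma
  have hswap : ∀ x y : X, G x x y ≤ 2 * K * G x y y := by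
    intro x y
    have h := hrect x x y y
    have h2 : G y x y = G x y y := hG.symm_left y x y
    rw [h2] at h
    calc G x x y ≤ K * (G x y y + G x y y) := h
      _ = 2 * K * G x y y := by ring
  -- zero distance implies equal
  have hzero_eq : ∀ x y : X, G x y y = 0 → x = y := by
    intro x y h
    by_contra hne
    have h1 := hG.pos x y hne
    have h2 := hswap x y
    rw [h] at h2
    simp only [mul_zero] at h2
    linarith
  -- basic F facts
  have hF1 : 0 < F 1 := by
    rcases (hFnn 1 zero_le_one).lt_or_eq with h | h
    · exact h
    · exact absurd ((hF0 1 zero_le_one).mp h.symm) one_ne_zero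
  have hFzero : F 0 = 0 := (hF0 0 le_rfl).mpr rfl
  have hFform : ∀ t, 0 ≤ t → F t = t ^ s * F 1 := by
    intro t ht; simpa using hFhom t 1 ht zero_le_one
  -- uniqueness of fixed points
  have huniq : ∀ p q : X, T p = p → T q = q → p = q := by
    intro p q hp hq
    by_contra hne
    have h := hcontr p q q hne 1 1 1 le_rfl le_rfl le_rfl
    rw [Function.iterate_one] at h
    rw [hp, hq] at h
    rw [hG.eq_zero p, hG.eq_zero q, hG.eq_zero (b 1)] at h
    simp only [add_zero, mul_zero, zero_mul, hFzero] at h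
    have hnn := hFnn _ (hG.nonneg p q q)
    have heq0 : F (G p q q) = 0 := le_antisymm (by linarith) hnn
    exact hne (hzero_eq p q ((hF0 _ (hG.nonneg p q q)).mp heq0))
  -- main case split: existence of a periodic point
  by_cases hper : ∃ q : X, ∃ n : ℕ, 1 ≤ n ∧ T^[n] q = q
  · obtain ⟨q, n, hn, hqn⟩ := hper
    have hfq : T q = q := by
      by_contra hne'
      have hne : q ≠ T q := fun h => hne' h.symm
      have h := hcontr q (T q) (T q) hne n n n hn hn hn
      have hTn : T^[n] (T q) = T q := by
        rw [← Function.iterate_succ_apply, Function.iterate_succ_apply', hqn]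
      rw [hqn, hTn] at h
      rw [hG.eq_zero q, hG.eq_zero (T q), hG.eq_zero (b n)] at h
      simp only [add_zero, mul_zero, zero_mul, hFzero] at h
      have hnn := hFnn _ (hG.nonneg q (T q) (T q))
      have heq0 : F (G q (T q) (T q)) = 0 := le_antisymm (by linarith) hnn
      exact hne (hzero_eq q (T q) ((hF0 _ (hG.nonneg q (T q) (T q))).mp heq0))
    exact ⟨q, hfq, fun y hy => huniq y q hy hfq⟩
  · push_neg at hper
    -- hper : ∀ q n, 1 ≤ n → T^[n] q ≠ q
    obtain ⟨lam, hlam0, hlam1, N, hN⟩ := hlamseq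
    set μ : ℝ := (1 + lam) / 2 with hμdef
    have hμ0 : 0 < μ := by rw [hμdef]; linarith
    have hμ1 : μ < 1 := by rw [hμdef]; linarith
    have hlamμ : lam < μ := by rw [hμdef]; linarith
    have hrmono : ∀ i j : ℕ, 1 ≤ i → i ≤ j → r j ≤ r i := by
      intro i j hi hij
      induction j, hij using Nat.le_induction with
      | base => exact le_rfl
      | succ n hn ih => exact le_trans (hdec n (le_trans hi hn)) ih
    have hDen : ∀ i : ℕ, 1 ≤ i → 0 < 1 - (2 * G (a i) (a (i+1)) (a (i+1))) ^ s := by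
      intro i hi
      have h1 : G (a i) (a (i+1)) (a (i+1)) < 1/2 :=
        hΔ i (i+1) (i+1) hi (by omega) (by omega)
      have h2 : (0:ℝ) ≤ 2 * G (a i) (a (i+1)) (a (i+1)) := by
        have := hG.nonneg (a i) (a (i+1)) (a (i+1)); linarith
      have h3 : 2 * G (a i) (a (i+1)) (a (i+1)) < 1 := by linarith
      have := Real.rpow_lt_one h2 h3 hs
      linarith
    have hrnn : ∀ i : ℕ, 1 ≤ i → 0 ≤ r i := by
      intro i hi
      rw [hr i]
      exact div_nonneg
        (add_nonneg (Real.rpow_nonneg (hG.nonneg _ _ _) s)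
          (Real.rpow_nonneg (hG.nonneg _ _ _) s)) (hDen i hi).le
    have hΓle : ∀ i : ℕ, 1 ≤ i → (G (b i) (b (i+1)) (b (i+1))) ^ s ≤ r i := by
      intro i hi
      have hD := hDen i hi
      have h1 : (G (a i) (a (i+1)) (a (i+1)))^s + (G (b i) (b (i+1)) (b (i+1)))^s
          = r i * (1 - (2 * G (a i) (a (i+1)) (a (i+1)))^s) := by
        rw [hr i]
        exact (div_mul_cancel₀ _ hD.ne').symm
      have h2 : 0 ≤ (G (a i) (a (i+1)) (a (i+1)))^s :=
        Real.rpow_nonneg (hG.nonneg _ _ _) s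
      have h3 : 0 ≤ (2 * G (a i) (a (i+1)) (a (i+1)))^s := by
        apply Real.rpow_nonneg
        have := hG.nonneg (a i) (a (i+1)) (a (i+1)); linarith
      have h4 := hrnn i hi
      nlinarith [mul_nonneg h4 h3]
    -- the threshold M
    set M : ℕ := max (N + 1) (⌈lam / (μ - lam)⌉₊ + 1) with hMdef
    have hM1 : 1 ≤ M := le_trans (by omega) (le_max_left (N+1) _)
    have hMN : N + 1 ≤ M := le_max_left _ _
    have hMceil : lam / (μ - lam) < (M:ℝ) := by
      have h1 : (⌈lam / (μ - lam)⌉₊ + 1 : ℕ) ≤ M := le_max_right _ _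
      have h2 := Nat.le_ceil (lam / (μ - lam))
      have h3 : ((⌈lam / (μ - lam)⌉₊ + 1 : ℕ) : ℝ) ≤ (M:ℝ) := Nat.cast_le.mpr h1
      push_cast at h3
      linarith
    have hMμ : ∀ m, M ≤ m → r m ≤ μ := by
      intro m hm
      by_contra hcon
      push_neg at hcon
      have h1m : 1 ≤ m := le_trans hM1 hm
      have hlb : (m:ℝ) * μ ≤ ∑ i ∈ Finset.Icc 1 m, r i := by
        have h1 : ∀ i ∈ Finset.Icc 1 m, μ ≤ r i := by
          intro i hi
          rw [Finset.mem_Icc] at hi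
          exact le_trans hcon.le (hrmono i m hi.1 hi.2)
        calc (m:ℝ) * μ = ∑ _i ∈ Finset.Icc 1 m, μ := by
              rw [Finset.sum_const, Nat.card_Icc, Nat.add_sub_cancel, nsmul_eq_mul]
          _ ≤ _ := Finset.sum_le_sum h1
      have hub := hN (m+1) (by omega)
      rw [Nat.add_sub_cancel] at hub
      push_cast at hub
      have hmM : (M:ℝ) ≤ (m:ℝ) := Nat.cast_le.mpr hm
      have h5 : (m:ℝ) * (μ - lam) ≤ lam := by linarith
      have h6 : (m:ℝ) ≤ lam / (μ - lam) := by
        rw [le_div_iff₀ (by linarith : (0:ℝ) < μ - lam)]; linarith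
      linarith
    -- the chain
    set x0 : X := a 0 with hx0def
    set v : ℕ → X := chainSeq T x0 with hvdef
    have hvs : ∀ n, v (n+1) = T^[n+1] (v n) := by
      intro n; rw [hvdef]; rfl
    have hTv : ∀ n, T^[n+1] (T (v n)) = T (v (n+1)) := by
      intro n
      rw [hvs n]
      exact (Function.iterate_succ_apply T (n+1) (v n)).symm.trans
        (Function.iterate_succ_apply' T (n+1) (v n))
    have hvT : ∀ n, T (v (n+1)) = T^[n+1+1] (v n) := by
      intro n
      rw [hvs n]
      exact (Function.iterate_succ_apply' T (n+1) (v n)).symm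
    have hvneq : ∀ n, v n ≠ v (n+1) := by
      intro n h
      apply hper (v n) (n+1) (by omega)
      rw [← hvs n]; exact h.symm
    have hB'ne : ∀ n, T (v n) ≠ T (v (n+1)) := by
      intro n h
      apply hper (T (v n)) (n+1) (by omega)
      rw [hTv n]; exact h.symm
    have hWne : ∀ n, v n ≠ T (v (n+1)) := by
      intro n h
      apply hper (v n) (n+1+1) (by omega)
      rw [← hvT n]; exact h.symm
    -- the key contraction inequality
    have key : ∀ (x y : X) (n : ℕ), x ≠ y →
        F (G (T^[n+1] x) (T^[n+1+1] y) (T^[n+1+1] y)) ≤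
          (G (a (n+1)) (a (n+1+1)) (a (n+1+1))) ^ s * F (G x (T^[n+1] x) (T^[n+1] x)) +
          (2 * G (a (n+1)) (a (n+1+1)) (a (n+1+1))) ^ s * F (G y (T^[n+1+1] y) (T^[n+1+1] y)) +
          (G (b (n+1)) (b (n+1+1)) (b (n+1+1))) ^ s * F (G x y y) := by
      intro x y n hxy
      have h := hcontr x y y hxy (n+1) (n+1+1) (n+1+1) (by omega) (by omega) (by omega)
      set Δ := G (a (n+1)) (a (n+1+1)) (a (n+1+1)) with hΔdef
      set Γ' := G (b (n+1)) (b (n+1+1)) (b (n+1+1)) with hΓdef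
      set A := G x (T^[n+1] x) (T^[n+1] x) with hA
      set E := G y (T^[n+1+1] y) (T^[n+1+1] y) with hE
      set C := G x y y with hC
      have hAnn : 0 ≤ A := hG.nonneg _ _ _
      have hEnn : 0 ≤ E := hG.nonneg _ _ _
      have hCnn : 0 ≤ C := hG.nonneg _ _ _
      have hΔnn : 0 ≤ Δ := hG.nonneg _ _ _
      have hΓnn : 0 ≤ Γ' := hG.nonneg _ _ _
      have heq : A + E + E = A + 2 * E := by ring
      rw [heq] at h
      have h1 : F (Δ * (A + 2*E)) = Δ ^ s * F (A + 2*E) := hFhom Δ _ hΔnn (by linarith)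
      have h2 : F (A + 2*E) ≤ F A + F (2*E) := hFsub A (2*E) hAnn (by linarith)
      have h3 : F (2*E) = 2 ^ s * F E := hFhom 2 E (by norm_num) hEnn
      have h4 : F (Γ' * C) = Γ' ^ s * F C := hFhom Γ' C hΓnn hCnn
      have h5 : (2 * Δ) ^ s = 2 ^ s * Δ ^ s := Real.mul_rpow (by norm_num) hΔnn
      have hΔs : (0:ℝ) ≤ Δ ^ s := Real.rpow_nonneg hΔnn s
      calc F (G (T^[n+1] x) (T^[n+1+1] y) (T^[n+1+1] y))
          ≤ F (Δ * (A + 2*E)) + F (Γ' * C) := h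
        _ = Δ^s * F (A + 2*E) + Γ'^s * F C := by rw [h1, h4]
        _ ≤ Δ^s * (F A + F (2*E)) + Γ'^s * F C := by
            have := mul_le_mul_of_nonneg_left h2 hΔs; linarith
        _ = Δ^s * F A + (2*Δ)^s * F E + Γ'^s * F C := by rw [h3, h5]; ring
    -- the three sequences
    set B : ℕ → ℝ := fun n => G (v n) (v (n+1)) (v (n+1)) with hBdef
    set B' : ℕ → ℝ := fun n => G (T (v n)) (T (v (n+1))) (T (v (n+1))) with hB'def
    set W : ℕ → ℝ := fun n => G (v n) (T (v (n+1))) (T (v (n+1))) with hWdef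
    have hBnn : ∀ n, 0 ≤ B n := fun n => hG.nonneg _ _ _
    have hB'nn : ∀ n, 0 ≤ B' n := fun n => hG.nonneg _ _ _
    have hWnn : ∀ n, 0 ≤ W n := fun n => hG.nonneg _ _ _
    have hBFnn : ∀ n, 0 ≤ F (B n) := fun n => hFnn _ (hBnn n)
    have hB'Fnn : ∀ n, 0 ≤ F (B' n) := fun n => hFnn _ (hB'nn n)
    have hWFnn : ∀ n, 0 ≤ F (W n) := fun n => hFnn _ (hWnn n)
    -- recursion for B
    have hBrec : ∀ n, F (B (n+1)) ≤ r (n+1) * F (B n) := by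
      intro n
      have h := key (v n) (v (n+1)) n (hvneq n)
      rw [← hvs n, ← hvs (n+1)] at h
      have hD := hDen (n+1) (by omega)
      have hrw := hr (n+1)
      simp only [hBdef]
      have h' : F (G (v (n+1)) (v (n+1+1)) (v (n+1+1))) -
          (2 * G (a (n+1)) (a (n+1+1)) (a (n+1+1)))^s *
            F (G (v (n+1)) (v (n+1+1)) (v (n+1+1))) ≤
          ((G (a (n+1)) (a (n+1+1)) (a (n+1+1)))^s +
            (G (b (n+1)) (b (n+1+1)) (b (n+1+1)))^s) *
            F (G (v n) (v (n+1)) (v (n+1))) := by linarith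
      rw [hrw, div_mul_eq_mul_div, le_div_iff₀ hD]
      have hexp : F (G (v (n+1)) (v (n+1+1)) (v (n+1+1))) *
          (1 - (2 * G (a (n+1)) (a (n+1+1)) (a (n+1+1)))^s) =
          F (G (v (n+1)) (v (n+1+1)) (v (n+1+1))) -
          (2 * G (a (n+1)) (a (n+1+1)) (a (n+1+1)))^s *
            F (G (v (n+1)) (v (n+1+1)) (v (n+1+1))) := by ring
      rw [hexp]
      linarith
    -- recursion for B'
    have hB'rec : ∀ n, F (B' (n+1)) ≤ r (n+1) * F (B' n) := by
      intro n
      have h := key (T (v n)) (T (v (n+1))) n (hB'ne n)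
      rw [hTv n, hTv (n+1)] at h
      have hD := hDen (n+1) (by omega)
      have hrw := hr (n+1)
      simp only [hB'def]
      have h' : F (G (T (v (n+1))) (T (v (n+1+1))) (T (v (n+1+1)))) -
          (2 * G (a (n+1)) (a (n+1+1)) (a (n+1+1)))^s *
            F (G (T (v (n+1))) (T (v (n+1+1))) (T (v (n+1+1)))) ≤
          ((G (a (n+1)) (a (n+1+1)) (a (n+1+1)))^s +
            (G (b (n+1)) (b (n+1+1)) (b (n+1+1)))^s) *
            F (G (T (v n)) (T (v (n+1))) (T (v (n+1)))) := by linarith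
      rw [hrw, div_mul_eq_mul_div, le_div_iff₀ hD]
      have hexp : F (G (T (v (n+1))) (T (v (n+1+1))) (T (v (n+1+1)))) *
          (1 - (2 * G (a (n+1)) (a (n+1+1)) (a (n+1+1)))^s) =
          F (G (T (v (n+1))) (T (v (n+1+1))) (T (v (n+1+1)))) -
          (2 * G (a (n+1)) (a (n+1+1)) (a (n+1+1)))^s *
            F (G (T (v (n+1))) (T (v (n+1+1))) (T (v (n+1+1)))) := by ring
      rw [hexp]
      linarith
    -- geometric decay
    have geo : ∀ (u : ℕ → ℝ), (∀ n, 0 ≤ F (u n)) →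
        (∀ n, F (u (n+1)) ≤ r (n+1) * F (u n)) →
        ∀ k, F (u (M + k)) ≤ μ ^ k * F (u M) := by
      intro u hu hrec k
      induction k with
      | zero => simp
      | succ k ih =>
        have h1 := hrec (M + k)
        have h2 : r (M + k + 1) ≤ μ := hMμ (M + k + 1) (by omega)
        have h3 : F (u (M + k + 1)) ≤ μ * F (u (M + k)) :=
          le_trans h1 (mul_le_mul_of_nonneg_right h2 (hu _))
        calc F (u (M + (k+1))) = F (u (M + k + 1)) := by rw [← Nat.add_assoc]
          _ ≤ μ * F (u (M + k)) := h3
          _ ≤ μ * (μ^k * F (u M)) := mul_le_mul_of_nonneg_left ih hμ0.le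
          _ = μ^(k+1) * F (u M) := by ring
    -- weakened W recursion
    have hΓμ : ∀ n, M ≤ n + 1 → (G (b (n+1)) (b (n+1+1)) (b (n+1+1)))^s ≤ μ :=
      fun n h => le_trans (hΓle (n+1) (by omega)) (hMμ (n+1) h)
    have hWrec : ∀ k, F (W (M + k + 1)) ≤ μ * F (W (M + k)) + (F (B M) + F (B' M)) * μ ^ k := by
      intro k
      have h := key (v (M+k)) (T (v (M+k+1))) (M+k) (hWne (M+k))
      rw [← hvs (M+k), hTv (M+k+1)] at h
      have hΔ1 : (G (a (M+k+1)) (a (M+k+1+1)) (a (M+k+1+1)))^s ≤ 1 := by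
        apply Real.rpow_le_one (hG.nonneg _ _ _) _ hs.le
        have := hΔ (M+k+1) (M+k+1+1) (M+k+1+1) (by omega) (by omega) (by omega)
        linarith
      have hΔ2 : (2 * G (a (M+k+1)) (a (M+k+1+1)) (a (M+k+1+1)))^s ≤ 1 := by
        apply Real.rpow_le_one _ _ hs.le
        · have := hG.nonneg (a (M+k+1)) (a (M+k+1+1)) (a (M+k+1+1)); linarith
        · have := hΔ (M+k+1) (M+k+1+1) (M+k+1+1) (by omega) (by omega) (by omega)
          linarith
      have hΓ2 : (G (b (M+k+1)) (b (M+k+1+1)) (b (M+k+1+1)))^s ≤ μ := hΓμ (M+k) (by omega)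
      have g1 : F (B (M+k)) ≤ μ^k * F (B M) := geo B hBFnn hBrec k
      have g2 : F (B' (M+k+1)) ≤ μ^k * F (B' M) := by
        have hg := geo B' hB'Fnn hB'rec (k+1)
        rw [← Nat.add_assoc] at hg
        calc F (B' (M+k+1)) ≤ μ^(k+1) * F (B' M) := hg
          _ ≤ μ^k * F (B' M) := by
              apply mul_le_mul_of_nonneg_right _ (hB'Fnn M)
              exact pow_le_pow_of_le_one hμ0.le hμ1.le (by omega)
      have hBn : 0 ≤ F (B (M+k)) := hBFnn _
      have hB'n : 0 ≤ F (B' (M+k+1)) := hB'Fnn _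
      have hWn : 0 ≤ F (W (M+k)) := hWFnn _
      simp only [hWdef, hBdef, hB'def] at h g1 g2 hBn hB'n hWn ⊢
      have c1 := mul_le_of_le_one_left hBn hΔ1
      have c2 := mul_le_of_le_one_left hB'n hΔ2
      have c3 := mul_le_mul_of_nonneg_right hΓ2 hWn
      linarith
    have hFWten : Tendsto (fun k => F (W (M + k))) atTop (𝓝 0) := by
      apply tendsto_rec_aux μ (F (B M) + F (B' M)) hμ0 hμ1
        (fun k => F (W (M + k))) (fun k => hWFnn (M+k))
      intro k
      have := hWrec k
      rw [← Nat.add_assoc]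
      exact this
    have hWten : Tendsto (fun k => W (M + k)) atTop (𝓝 0) :=
      tendsto_of_rpow_tendsto s hs (F 1) hF1 _ (fun k => hWnn _)
        (hFWten.congr (fun k => hFform _ (hWnn _)))
    -- pointwise geometric bound on B
    set ρ : ℝ := μ ^ (1/s) with hρdef
    have hρ0 : 0 < ρ := Real.rpow_pos_of_pos hμ0 _
    have hρ1 : ρ < 1 := Real.rpow_lt_one hμ0.le hμ1 (by positivity)
    set CB : ℝ := (F (B M) / F 1) ^ (1/s) with hCBdef
    have hCB0 : 0 ≤ CB := Real.rpow_nonneg (div_nonneg (hBFnn M) hF1.le) _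
    have hpoweq : ∀ k : ℕ, ((μ ^ k : ℝ)) ^ (1/s) = ρ ^ k := by
      intro k
      rw [hρdef, ← Real.rpow_natCast μ k, ← Real.rpow_natCast (μ ^ (1/s)) k,
        ← Real.rpow_mul hμ0.le, ← Real.rpow_mul hμ0.le, mul_comm]
    have hBle : ∀ k, B (M + k) ≤ CB * ρ ^ k := by
      intro k
      have h1 := geo B hBFnn hBrec k
      rw [hFform _ (hBnn (M+k))] at h1
      have h2 : B (M+k) ^ s ≤ μ^k * F (B M) / F 1 := by
        rw [le_div_iff₀ hF1]; exact h1
      have h3 : B (M+k) = (B (M+k) ^ s) ^ (1/s) := by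
        rw [← Real.rpow_mul (hBnn _), mul_one_div, div_self hs.ne', Real.rpow_one]
      rw [h3]
      calc (B (M+k) ^ s) ^ (1/s) ≤ (μ^k * F (B M) / F 1) ^ (1/s) :=
          Real.rpow_le_rpow (Real.rpow_nonneg (hBnn _) s) h2 (by positivity)
        _ = (μ^k * (F (B M) / F 1)) ^ (1/s) := by rw [mul_div_assoc]
        _ = (μ^k)^(1/s) * (F (B M) / F 1)^(1/s) :=
            Real.mul_rpow (pow_nonneg hμ0.le k) (div_nonneg (hBFnn M) hF1.le)
        _ = ρ^k * CB := by rw [hpoweq k, hCBdef]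
        _ = CB * ρ^k := mul_comm _ _
    have hBle' : ∀ j, M ≤ j → G (v j) (v (j+1)) (v (j+1)) ≤ CB * ρ^(j-M) := by
      intro j hj
      have h := hBle (j - M)
      rw [show M + (j - M) = j from by omega] at h
      simpa only [hBdef] using h
    have hgeom : ∀ t : ℕ, (∑ i ∈ Finset.range t, ρ^i) ≤ 1/(1-ρ) := by
      intro t
      have h2 : (∑ i ∈ Finset.range t, ρ^i) * (1-ρ) = 1 - ρ^t := by
        linear_combination -geom_sum_mul ρ t
      rw [le_div_iff₀ (by linarith : (0:ℝ) < 1 - ρ), h2]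
      have := pow_nonneg hρ0.le t
      linarith
    set D : ℝ := K * CB * (1/(1-ρ)) with hDdef
    have hD0 : 0 ≤ D := by
      rw [hDdef]
      have h1 : (0:ℝ) ≤ 1/(1-ρ) := le_of_lt (div_pos one_pos (by linarith))
      exact mul_nonneg (mul_nonneg hK0.le hCB0) h1
    have hdist : ∀ n m, M ≤ n → n < m →
        G (v n) (v m) (v m) ≤ D * ρ^(n-M) := by
      intro n m hMn hnm
      rw [hDdef]
      obtain ⟨L, rfl⟩ : ∃ L, m = n + 1 + L := ⟨m - n - 1, by omega⟩
      have hpoly := hG.polygon (v n) (v (n+1+L)) (v (n+1+L)) L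
        (fun i : Fin (L+1) => v (n+1+(i:ℕ)))
      simp only [Fin.val_zero, Nat.add_zero, Fin.coe_castSucc, Fin.val_succ, Fin.val_last,
        ← Nat.add_assoc] at hpoly
      rw [hG.eq_zero (v (n+1+L))] at hpoly
      have ht0 : G (v n) (v (n+1)) (v (n+1)) ≤ CB * ρ^(n-M) := hBle' n hMn
      have hterm : ∀ i : Fin L,
          G (v (n+1+(i:ℕ))) (v (n+1+(i:ℕ)+1)) (v (n+1+(i:ℕ)+1)) ≤
            CB * ρ^(n-M) * ρ * ρ^(i:ℕ) := by
        intro i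
        have h := hBle' (n+1+(i:ℕ)) (by omega)
        rw [show n+1+(i:ℕ)-M = (n-M)+(1+(i:ℕ)) from by omega, pow_add, pow_add, pow_one] at h
        calc G (v (n+1+(i:ℕ))) (v (n+1+(i:ℕ)+1)) (v (n+1+(i:ℕ)+1))
            ≤ CB * (ρ^(n-M) * (ρ * ρ^(i:ℕ))) := h
          _ = CB * ρ^(n-M) * ρ * ρ^(i:ℕ) := by ring
      have hsumle : (∑ i : Fin L, G (v (n+1+(i:ℕ))) (v (n+1+(i:ℕ)+1)) (v (n+1+(i:ℕ)+1)))
          ≤ CB * ρ^(n-M) * ρ * (1/(1-ρ)) := by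
        calc (∑ i : Fin L, G (v (n+1+(i:ℕ))) (v (n+1+(i:ℕ)+1)) (v (n+1+(i:ℕ)+1)))
            ≤ ∑ i : Fin L, CB * ρ^(n-M) * ρ * ρ^(i:ℕ) :=
              Finset.sum_le_sum (fun i _ => hterm i)
          _ = ∑ i ∈ Finset.range L, CB * ρ^(n-M) * ρ * ρ^i :=
              Fin.sum_univ_eq_sum_range (fun j => CB * ρ^(n-M) * ρ * ρ^j) L
          _ = CB * ρ^(n-M) * ρ * ∑ i ∈ Finset.range L, ρ^i := by
              rw [Finset.mul_sum]
          _ ≤ CB * ρ^(n-M) * ρ * (1/(1-ρ)) := by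
              apply mul_le_mul_of_nonneg_left (hgeom L)
              exact mul_nonneg (mul_nonneg hCB0 (pow_nonneg hρ0.le _)) hρ0.le
      calc G (v n) (v (n+1+L)) (v (n+1+L))
          ≤ K * (G (v n) (v (n+1)) (v (n+1)) +
            (∑ i : Fin L, G (v (n+1+(i:ℕ))) (v (n+1+(i:ℕ)+1)) (v (n+1+(i:ℕ)+1))) + 0) := hpoly
        _ ≤ K * (CB * ρ^(n-M) + CB * ρ^(n-M) * ρ * (1/(1-ρ)) + 0) := by
            apply mul_le_mul_of_nonneg_left _ hK0.le
            exact add_le_add (add_le_add ht0 hsumle) le_rfl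
        _ = K * CB * (1/(1-ρ)) * ρ^(n-M) := by
            have h1 : (1:ℝ) - ρ ≠ 0 := by intro hc; rw [sub_eq_zero] at hc; linarith
            field_simp
            ring
    have hcau : GCauchySeq G v := by
      intro ε hε
      have hten : Tendsto (fun j : ℕ => (2*K*D + D) * ρ^j) atTop (𝓝 0) := by
        simpa using (tendsto_pow_atTop_nhds_zero_of_lt_one hρ0.le hρ1).const_mul (2*K*D + D)
      obtain ⟨j₀, hj₀⟩ := (hten.eventually (gt_mem_nhds hε)).exists
      refine ⟨M + j₀, fun m n hm hn => ?_⟩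
      have hρj : ∀ i, M + j₀ ≤ i → ρ^(i - M) ≤ ρ^j₀ := fun i hi =>
        pow_le_pow_of_le_one hρ0.le hρ1.le (by omega)
      rcases lt_trichotomy n m with h | h | h
      · have h1 := hdist n m (by omega) h
        have h3 : D * ρ^(n-M) ≤ D * ρ^j₀ := mul_le_mul_of_nonneg_left (hρj n hn) hD0
        have h6 : D * ρ^j₀ ≤ (2*K*D + D)*ρ^j₀ := by
          apply mul_le_mul_of_nonneg_right _ (pow_nonneg hρ0.le _)
          nlinarith
        exact lt_of_le_of_lt (le_trans (le_trans h1 h3) h6) hj₀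
      · rw [h, hG.eq_zero]
        exact hε
      · have h1 := hdist m n (by omega) h
        have h2 : G (v n) (v m) (v m) = G (v m) (v m) (v n) := hsym (v n) (v m)
        have h3 := hswap (v m) (v n)
        have h4 : G (v m) (v n) (v n) ≤ D * ρ^j₀ :=
          le_trans h1 (mul_le_mul_of_nonneg_left (hρj m hm) hD0)
        have h5 : G (v n) (v m) (v m) ≤ 2*K*(D * ρ^j₀) := by
          rw [h2]
          exact le_trans h3 (mul_le_mul_of_nonneg_left h4 (by linarith))
        have h6 : 2*K*(D*ρ^j₀) ≤ (2*K*D + D)*ρ^j₀ := by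
          have h7 : 0 ≤ D * ρ^j₀ := mul_nonneg hD0 (pow_nonneg hρ0.le _)
          nlinarith
        exact lt_of_le_of_lt (le_trans h5 h6) hj₀
    obtain ⟨p, hp0⟩ := hcomp v hcau
    have hp : Tendsto (fun n => G p (v n) (v n)) atTop (𝓝 0) := hp0
    have hTt : Tendsto (fun n => G (T p) (T (v n)) (T (v n))) atTop (𝓝 0) := hcont v p hp0
    have htadd : ∀ c : ℕ, Tendsto (fun k : ℕ => c + k) atTop atTop := fun c =>
      tendsto_atTop_mono (fun k => Nat.le_add_left k c) tendsto_id
    have hp' : Tendsto (fun k => G p (v (M + k)) (v (M + k))) atTop (𝓝 0) := by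
      have := hp.comp (htadd M)
      exact this
    have he2' : Tendsto (fun k => G (T p) (T (v (M + k + 1))) (T (v (M + k + 1)))) atTop (𝓝 0) := by
      have hc2 : Tendsto (fun k : ℕ => M + k + 1) atTop atTop :=
        tendsto_atTop_mono (fun k => le_trans (Nat.le_add_left k M) (Nat.le_succ (M + k))) tendsto_id
      have := hTt.comp hc2
      exact this
    have hple : ∀ k, G p (T p) (T p) ≤
        K * (G p (v (M+k)) (v (M+k)) +
          2*K*(K*(G (T p) (T (v (M+k+1))) (T (v (M+k+1))) + 2*K*(W (M+k))))) := by
      intro k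
      have i1 := hrect p (T p) (T p) (v (M+k))
      have i2 : G (v (M+k)) (T p) (T p) ≤ 2*K*G (T p) (v (M+k)) (v (M+k)) := by
        rw [hsym (v (M+k)) (T p)]
        exact hswap (T p) (v (M+k))
      have i3 := hrect (T p) (v (M+k)) (v (M+k)) (T (v (M+k+1)))
      have i4 : G (T (v (M+k+1))) (v (M+k)) (v (M+k)) ≤ 2*K*(W (M+k)) := by
        rw [hsym (T (v (M+k+1))) (v (M+k))]
        simp only [hWdef]
        exact hswap (v (M+k)) (T (v (M+k+1)))
      have i5 : G (T p) (v (M+k)) (v (M+k)) ≤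
          K * (G (T p) (T (v (M+k+1))) (T (v (M+k+1))) + 2*K*(W (M+k))) :=
        le_trans i3 (mul_le_mul_of_nonneg_left (add_le_add_right i4 _) hK0.le)
      have i6 : G (v (M+k)) (T p) (T p) ≤
          2*K*(K * (G (T p) (T (v (M+k+1))) (T (v (M+k+1))) + 2*K*(W (M+k)))) :=
        le_trans i2 (mul_le_mul_of_nonneg_left i5 (by linarith))
      exact le_trans i1 (mul_le_mul_of_nonneg_left (add_le_add_right i6 _) hK0.le)
    have hRHS : Tendsto (fun k => K * (G p (v (M+k)) (v (M+k)) +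
        2*K*(K*(G (T p) (T (v (M+k+1))) (T (v (M+k+1))) + 2*K*(W (M+k)))))) atTop (𝓝 0) := by
      have h1 := (he2'.add (hWten.const_mul (2*K))).const_mul K
      have h2 := (hp'.add (h1.const_mul (2*K))).const_mul K
      simpa using h2
    have hle0 : G p (T p) (T p) ≤ 0 := ge_of_tendsto hRHS (Filter.Eventually.of_forall hple)
    have heq0 : G p (T p) (T p) = 0 := le_antisymm hle0 (hG.nonneg _ _ _)
    have hfix : T p = p := (hzero_eq p (T p) heq0).symm
    exact ⟨p, hfix, fun y hy => huniq y p hy hfix⟩
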